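/- Duality principle (determinantal form): let $A$ be an $n\times n$ matrix with entries in $\{0,1\}$ such that every column of $A$ sums to $d$, and let $A^\vee = J - A$ where $J$ is the all-ones matrix. Then every column of $A^\vee$ sums to $n-d$, and $\det A = \pm d$ if and only if $\det A^\vee = \pm (n-d)$. -/

import Mathlib

/-- Duality principle, determinantal form: if `A` is an `n × n` `0/1` matrix with
all column sums `d` (with `1 ≤ d < n`), then the columns of `A^∨ = J - A` sum to
`n - d`, and `det A = ± d` if and only if `det A^∨ = ± (n - d)`. -/
theorem duality_principle_det (n : ℕ) (d : ℤ) (hd1 : 1 ≤ d) (hdn : d < n)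
    (A : Matrix (Fin n) (Fin n) ℤ)
    (h01 : ∀ i j, A i j = 0 ∨ A i j = 1)
    (hcol : ∀ j, ∑ i, A i j = d) :
    (∀ j, ∑ i, (1 - A i j) = (n : ℤ) - d) ∧
    ((A.det = d ∨ A.det = -d) ↔
      ((Matrix.of fun i j => 1 - A i j).det = (n : ℤ) - d ∨
       (Matrix.of fun i j => 1 - A i j).det = -((n : ℤ) - d))) := by
  have hn2 : 2 ≤ n := by by_contra h; interval_cases n <;> omega
  have hn0 : 0 < n := by omega
  haveI : NeZero n := ⟨by omega⟩
  have hcolB : ∀ j, ∑ i, (1 - A i j) = (n : ℤ) - d := by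
    intro j
    simp [Finset.sum_sub_distrib, hcol j]
  refine ⟨hcolB, ?_⟩
  set B : Matrix (Fin n) (Fin n) ℤ := Matrix.of fun i j => 1 - A i j with hB
  set E : Matrix (Fin n) (Fin n) ℤ := A.updateRow 0 (fun _ => 1) with hE
  -- det A = d * det E
  have hA1 : A.updateRow 0 (∑ k, (fun _ : Fin n => (1:ℤ)) k • A k)
      = A.updateRow 0 (fun _ => d) := by
    have hs : ∑ k, (fun _ : Fin n => (1:ℤ)) k • A k = fun _ => d := by
      funext j
      simp only [one_smul, Finset.sum_apply]
      exact (Finset.sum_apply j Finset.univ (fun x => A x)).trans (hcol j)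
    rw [hs]
  have hdetA : A.det = d * E.det := by
    have h1 := Matrix.det_updateRow_sum A 0 (fun _ => (1:ℤ))
    rw [hA1] at h1
    have h2 : (A.updateRow 0 (fun _ => d)).det = d * E.det := by
      have hfd : (fun _ : Fin n => d) = d • (fun _ : Fin n => (1:ℤ)) := by funext j; simp
      rw [hfd, Matrix.det_updateRow_smul]
    rw [h2] at h1
    simpa using h1.symm
  set F : Matrix (Fin n) (Fin n) ℤ := B.updateRow 0 (fun _ => 1) with hF
  have hB1 : B.updateRow 0 (∑ k, (fun _ : Fin n => (1:ℤ)) k • B k)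
      = B.updateRow 0 (fun _ => (n : ℤ) - d) := by
    have hs : ∑ k, (fun _ : Fin n => (1:ℤ)) k • B k = fun _ => (n : ℤ) - d := by
      funext j
      simp only [one_smul, Finset.sum_apply]
      exact (Finset.sum_apply j Finset.univ (fun x => B x)).trans (hcolB j)
    rw [hs]
  have hdetB : B.det = ((n : ℤ) - d) * F.det := by
    have h1 := Matrix.det_updateRow_sum B 0 (fun _ => (1:ℤ))
    rw [hB1] at h1
    have h2 : (B.updateRow 0 (fun _ => (n:ℤ) - d)).det = ((n:ℤ) - d) * F.det := by
      have hfd : (fun _ : Fin n => (n:ℤ) - d) = ((n:ℤ) - d) • (fun _ : Fin n => (1:ℤ)) := by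
        funext j; simp
      rw [hfd, Matrix.det_updateRow_smul]
    rw [h2] at h1
    simpa using h1.symm
  -- F = P * E with P lower triangular, det P = (-1)^(n-1)
  set P : Matrix (Fin n) (Fin n) ℤ :=
    Matrix.of (fun i j => if j = 0 then 1 else if i = j then -1 else 0) with hP
  have hPE : P * E = F := by
    ext i j
    rw [Matrix.mul_apply]
    by_cases hi : i = 0
    · subst hi
      rw [Finset.sum_eq_single 0]
      · simp [hP, hE, hF]
      · intro k _ hk
        simp [hP, hk, Ne.symm hk]
      · simp
    · rw [← Finset.add_sum_erase _ _ (Finset.mem_univ (0 : Fin n)),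
          Finset.sum_eq_single i]
      · simp only [hP, hE, hF, Matrix.of_apply, Matrix.updateRow_ne hi, if_pos rfl,
          Matrix.updateRow_self, if_neg hi, hB]
        simp [hi]
        ring
      · intro k hk hki
        have hk0 : k ≠ 0 := Finset.ne_of_mem_erase hk
        simp [hP, hk0, Ne.symm hki]
      · intro h
        exact absurd (Finset.mem_erase.mpr ⟨hi, Finset.mem_univ i⟩) h
  have hPtri : P.BlockTriangular OrderDual.toDual := by
    intro i j hij
    have hij' : i < j := by simpa using hij
    have hj0 : j ≠ 0 := by
      intro h; subst h; exact absurd (Fin.lt_iff_val_lt_val.mp hij') (by simp)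
    have hne : i ≠ j := ne_of_lt hij'
    simp [hP, hj0, hne]
  have hdetP : P.det = (-1 : ℤ) ^ (n - 1) := by
    rw [Matrix.det_of_lowerTriangular P hPtri]
    have hdiag : ∀ i : Fin n, P i i = if i = 0 then 1 else -1 := by
      intro i
      by_cases hi : i = 0 <;> simp [hP, hi]
    rw [Finset.prod_congr rfl (fun i _ => hdiag i)]
    rw [← Finset.mul_prod_erase Finset.univ _ (Finset.mem_univ (0 : Fin n))]
    rw [if_pos rfl, one_mul]
    rw [Finset.prod_congr rfl (fun k hk => if_neg (Finset.ne_of_mem_erase hk))]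
    rw [Finset.prod_const]
    congr 1
    rw [Finset.card_erase_of_mem (Finset.mem_univ _), Finset.card_univ, Fintype.card_fin]
  have hdetF : F.det = (-1 : ℤ) ^ (n - 1) * E.det := by
    rw [← hPE, Matrix.det_mul, hdetP]
  -- final algebra
  have hd0 : d ≠ 0 := by omega
  have hnd0 : (n : ℤ) - d ≠ 0 := by omega
  have hsign : (-1 : ℤ) ^ (n - 1) = 1 ∨ (-1 : ℤ) ^ (n - 1) = -1 := by
    rcases Nat.even_or_odd (n - 1) with h | h
    · left; exact Even.neg_one_pow h
    · right; exact Odd.neg_one_pow h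
  have key : ∀ c x : ℤ, c ≠ 0 → ((c * x = c ∨ c * x = -c) ↔ (x = 1 ∨ x = -1)) := by
    intro c x hc
    constructor
    · rintro (h | h)
      · left; exact mul_left_cancel₀ hc (by linarith)
      · right; exact mul_left_cancel₀ hc (by linarith)
    · rintro (h | h)
      · left; rw [h, mul_one]
      · right; rw [h]; ring
  have hs' : ((-1:ℤ) ^ (n-1) * E.det = 1 ∨ (-1:ℤ) ^ (n-1) * E.det = -1)
      ↔ (E.det = 1 ∨ E.det = -1) := by
    rcases hsign with hs | hs <;> rw [hs] <;> constructor <;> rintro (h | h) <;>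
      first | (left; linarith) | (right; linarith)
  rw [hdetA, hdetB, hdetF]
  rw [key d E.det hd0, key ((n:ℤ) - d) _ hnd0, hs']
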